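/- arXiv:2504.21634 — 2 statements merged into one kernel-verified Lean document; each statement's English description precedes it below -/
import Mathlib

section
/- Let p ∈ ℕ, σ > 0, Δ ≥ 0, and let x, y ∈ ℝᵖ satisfy ‖x − y‖₂ ≤ Δ. Let P₁ and P₂ be the p-dimensional Gaussian measures on ℝᵖ with covariance σ²·I_p and mean vectors x and y respectively. Then for every α > 1, the Rényi divergence of order α between P₁ and P₂ is at most α·Δ²/(2σ²). Consequently, the Gaussian Mechanism M(D) = f(D) + N(0_p, σ²·I_p) applied to a function f : 𝒟 → ℝᵖ of sensitivity Δ_f = max_{D₁∼D₂} ‖f(D₁) − f(D₂)‖₂ satisfies (α, α·Δ_f²/(2σ²))-Rényi differential privacy: for all neighboring databases D₁ ∼ D₂, D_α(P_{M(D₁)} ‖ P_{M(D₂)}) ≤ α·Δ_f²/(2σ²). -/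
open MeasureTheory ProbabilityTheory

/-- Two databases (finite sets of rows) are neighbors if they differ in exactly one row. -/
def Neighbors {Row : Type*} [DecidableEq Row] (D₁ D₂ : Finset Row) : Prop :=
  (symmDiff D₁ D₂).card = 1

/-- The Rényi divergence of order `α` between the `p`-dimensional Gaussian measures with
mean vectors `x` and `y` and covariance `σ² I_p`, expressed via their product densities. -/
noncomputable def gaussRenyiDiv (α : ℝ) {p : ℕ} (σ : ℝ) (x y : Fin p → ℝ) : ℝ :=
  (α - 1)⁻¹ * Real.log (∫ t : Fin p → ℝ,
    (∏ i, gaussianPDFReal (x i) ⟨σ ^ 2, sq_nonneg σ⟩ (t i)) ^ α *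
    (∏ i, gaussianPDFReal (y i) ⟨σ ^ 2, sq_nonneg σ⟩ (t i)) ^ (1 - α))

open Real in
private lemma gauss_key (σ α x y t : ℝ) (hσ : 0 < σ) :
    gaussianPDFReal x ⟨σ ^ 2, sq_nonneg σ⟩ t ^ α *
      gaussianPDFReal y ⟨σ ^ 2, sq_nonneg σ⟩ t ^ (1 - α)
    = Real.exp (α * (α - 1) * (x - y) ^ 2 / (2 * σ ^ 2)) *
      gaussianPDFReal (α * x + (1 - α) * y) ⟨σ ^ 2, sq_nonneg σ⟩ t := by
  have hv : (0:ℝ) < σ ^ 2 := by positivity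
  have hc : (0:ℝ) < (Real.sqrt (2 * π * σ ^ 2))⁻¹ := by
    have : (0:ℝ) < 2 * π * σ ^ 2 := by positivity
    positivity
  simp only [gaussianPDFReal, NNReal.coe_mk]
  erw [NNReal.coe_mk]
  rw [Real.mul_rpow hc.le (Real.exp_nonneg _), Real.mul_rpow hc.le (Real.exp_nonneg _),
    ← Real.exp_mul, ← Real.exp_mul]
  have hcc : (Real.sqrt (2 * π * σ ^ 2))⁻¹ ^ α * (Real.sqrt (2 * π * σ ^ 2))⁻¹ ^ (1 - α)
      = (Real.sqrt (2 * π * σ ^ 2))⁻¹ := by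
    rw [← Real.rpow_add hc]; norm_num
  calc (Real.sqrt (2 * π * σ ^ 2))⁻¹ ^ α * Real.exp (-(t - x) ^ 2 / (2 * σ ^ 2) * α) *
        ((Real.sqrt (2 * π * σ ^ 2))⁻¹ ^ (1 - α) * Real.exp (-(t - y) ^ 2 / (2 * σ ^ 2) * (1 - α)))
      = ((Real.sqrt (2 * π * σ ^ 2))⁻¹ ^ α * (Real.sqrt (2 * π * σ ^ 2))⁻¹ ^ (1 - α)) *
        (Real.exp (-(t - x) ^ 2 / (2 * σ ^ 2) * α) * Real.exp (-(t - y) ^ 2 / (2 * σ ^ 2) * (1 - α))) := by ring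
    _ = (Real.sqrt (2 * π * σ ^ 2))⁻¹ *
        Real.exp (-(t - x) ^ 2 / (2 * σ ^ 2) * α + -(t - y) ^ 2 / (2 * σ ^ 2) * (1 - α)) := by
        rw [hcc, Real.exp_add]
    _ = _ := by
        conv_rhs => rw [mul_left_comm, ← Real.exp_add]
        congr 1
        field_simp
        ring

open Real in
private lemma gauss_int {p : ℕ} (σ α : ℝ) (x y : Fin p → ℝ) (hσ : 0 < σ) :
    (∫ t : Fin p → ℝ,
      (∏ i, gaussianPDFReal (x i) ⟨σ ^ 2, sq_nonneg σ⟩ (t i)) ^ α *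
      (∏ i, gaussianPDFReal (y i) ⟨σ ^ 2, sq_nonneg σ⟩ (t i)) ^ (1 - α))
    = Real.exp (α * (α - 1) * (∑ i, (x i - y i) ^ 2) / (2 * σ ^ 2)) := by
  have hv : (⟨σ ^ 2, sq_nonneg σ⟩ : NNReal) ≠ 0 :=
    fun h => (pow_ne_zero 2 hσ.ne') (congrArg NNReal.toReal h)
  have hrw : ∀ t : Fin p → ℝ,
      (∏ i, gaussianPDFReal (x i) ⟨σ ^ 2, sq_nonneg σ⟩ (t i)) ^ α *
      (∏ i, gaussianPDFReal (y i) ⟨σ ^ 2, sq_nonneg σ⟩ (t i)) ^ (1 - α)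
      = Real.exp (α * (α - 1) * (∑ i, (x i - y i) ^ 2) / (2 * σ ^ 2)) *
        ∏ i, gaussianPDFReal (α * x i + (1 - α) * y i) ⟨σ ^ 2, sq_nonneg σ⟩ (t i) := by
    intro t
    rw [← Real.finset_prod_rpow Finset.univ (fun i => gaussianPDFReal (x i) ⟨σ ^ 2, sq_nonneg σ⟩ (t i)) (fun i _ => gaussianPDFReal_nonneg _ _ _) α,
      ← Real.finset_prod_rpow Finset.univ (fun i => gaussianPDFReal (y i) ⟨σ ^ 2, sq_nonneg σ⟩ (t i)) (fun i _ => gaussianPDFReal_nonneg _ _ _) (1 - α),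
      ← Finset.prod_mul_distrib]
    simp_rw [gauss_key σ α _ _ _ hσ]
    rw [Finset.prod_mul_distrib, ← Real.exp_sum]
    congr 1
    rw [← Finset.sum_div, ← Finset.mul_sum]
  simp_rw [hrw]
  erw [MeasureTheory.integral_const_mul,
    MeasureTheory.integral_fintype_prod_eq_prod
      (fun i t => gaussianPDFReal (α * x i + (1 - α) * y i) ⟨σ ^ 2, sq_nonneg σ⟩ t)]
  simp [integral_gaussianPDFReal_eq_one _ hv]


/-- If `‖x - y‖₂ ≤ Δ`, then the Rényi divergence of order `α > 1` between the Gaussians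
`N(x, σ²I)` and `N(y, σ²I)` is at most `α Δ² / (2σ²)`.  Consequently, the Gaussian Mechanism
`M(D) = f(D) + N(0, σ²I)` for a function `f` of sensitivity
`Δf = max_{D₁ ∼ D₂} ‖f(D₁) - f(D₂)‖₂` satisfies `(α, α Δf² / (2σ²))`-Rényi differential
privacy: for all neighboring databases `D₁ ∼ D₂`, the Rényi divergence of order `α` between
the output distributions `N(f(D₁), σ²I)` and `N(f(D₂), σ²I)` is at most `α Δf² / (2σ²)`. -/
theorem gaussian_mechanism_rdp {Row : Type*} [DecidableEq Row] (p : ℕ) (σ Δ : ℝ)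
    (hσ : 0 < σ) (hΔ : 0 ≤ Δ) (f : Finset Row → (Fin p → ℝ)) (Δf : ℝ)
    (hsens : IsGreatest
      {d : ℝ | ∃ D₁ D₂ : Finset Row, Neighbors D₁ D₂ ∧
        d = Real.sqrt (∑ i, (f D₁ i - f D₂ i) ^ 2)} Δf) :
    (∀ x y : Fin p → ℝ, Real.sqrt (∑ i, (x i - y i) ^ 2) ≤ Δ → ∀ α : ℝ, 1 < α →
        gaussRenyiDiv α σ x y ≤ α * Δ ^ 2 / (2 * σ ^ 2)) ∧
    (∀ α : ℝ, 1 < α → ∀ D₁ D₂ : Finset Row, Neighbors D₁ D₂ →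
        gaussRenyiDiv α σ (f D₁) (f D₂) ≤ α * Δf ^ 2 / (2 * σ ^ 2)) := by
  have key : ∀ (Δ' : ℝ), 0 ≤ Δ' → ∀ x y : Fin p → ℝ,
      Real.sqrt (∑ i, (x i - y i) ^ 2) ≤ Δ' → ∀ α : ℝ, 1 < α →
      gaussRenyiDiv α σ x y ≤ α * Δ' ^ 2 / (2 * σ ^ 2) := by
    intro Δ' hΔ' x y hxy α hα
    have hα1 : α - 1 ≠ 0 := by linarith
    have hS : (∑ i, (x i - y i) ^ 2) ≤ Δ' ^ 2 := by
      have h0 : 0 ≤ ∑ i, (x i - y i) ^ 2 :=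
        Finset.sum_nonneg fun i _ => sq_nonneg _
      calc (∑ i, (x i - y i) ^ 2) = Real.sqrt (∑ i, (x i - y i) ^ 2) ^ 2 :=
            (Real.sq_sqrt h0).symm
        _ ≤ Δ' ^ 2 := by
            apply pow_le_pow_left₀ (Real.sqrt_nonneg _) hxy
    rw [gaussRenyiDiv, gauss_int σ α x y hσ, Real.log_exp]
    rw [show (α - 1)⁻¹ * (α * (α - 1) * (∑ i, (x i - y i) ^ 2) / (2 * σ ^ 2))
        = α * (∑ i, (x i - y i) ^ 2) / (2 * σ ^ 2) by field_simp]
    apply div_le_div_of_nonneg_right ?_ (by positivity)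
    · exact mul_le_mul_of_nonneg_left hS (by linarith)
  refine ⟨fun x y h α hα => key Δ hΔ x y h α hα, fun α hα D₁ D₂ hN => ?_⟩
  have hmem : Real.sqrt (∑ i, (f D₁ i - f D₂ i) ^ 2) ≤ Δf :=
    hsens.2 ⟨D₁, D₂, hN, rfl⟩
  have hΔf : 0 ≤ Δf := by
    obtain ⟨_, _, _, h⟩ := hsens.1
    rw [h]; exact Real.sqrt_nonneg _
  exact key Δf hΔf _ _ hmem α hα
end

section
/- Let (Ω, ℱ, P) be a probability space and let S, Ŷ, Y : Ω → {0,1} be measurable (binary) random variables such that P(S = 1, Ŷ = ŷ) > 0 and P(S ≠ 1, Ŷ = ŷ) > 0 for each ŷ ∈ {0,1}. Then S and Y are conditionally independent given Ŷ (the sufficiency fairness criterion) if and only if both equalities P[Y = 1 | S = 1, Ŷ = 1] = P[Y = 1 | S ≠ 1, Ŷ = 1] and P[Y = 0 | S = 1, Ŷ = 0] = P[Y = 0 | S ≠ 1, Ŷ = 0] hold, i.e., if and only if exact conditional use accuracy equality (both the true-positive and true-negative conditions with threshold ε = 0) holds. -/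
open MeasureTheory ProbabilityTheory
open scoped ENNReal

private lemma split_bool {Ω : Type*} [MeasurableSpace Ω] (P : MeasureTheory.Measure Ω)
    {g : Ω → Bool} (hg : Measurable g) (A : Set Ω) (hA : MeasurableSet A) :
    P A = P (A ∩ {ω | g ω = true}) + P (A ∩ {ω | g ω = false}) := by
  have hu : A = (A ∩ {ω | g ω = true}) ∪ (A ∩ {ω | g ω = false}) := by
    ext ω
    cases hgω : g ω <;> simp [hgω]
  have hdisj : Disjoint (A ∩ {ω | g ω = true}) (A ∩ {ω | g ω = false}) := by
    rw [Set.disjoint_left]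
    rintro ω ⟨-, h1⟩ ⟨-, h2⟩
    simp only [Set.mem_setOf_eq] at h1 h2
    rw [h1] at h2; exact Bool.noConfusion h2
  conv_lhs => rw [hu]
  exact measure_union hdisj (hA.inter (hg (MeasurableSet.singleton false)))

private lemma algA {e x u v : ℝ} (he : 0 < e) :
    e⁻¹ * x = e⁻¹ * u * (e⁻¹ * v) ↔ e * x = u * v := by
  have he' : e ≠ 0 := ne_of_gt he
  rw [inv_mul_eq_div, show e⁻¹ * u * (e⁻¹ * v) = u * v / (e * e) by field_simp,
    div_eq_div_iff he' (mul_ne_zero he' he')]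
  constructor
  · intro H
    exact mul_right_cancel₀ he' (by linear_combination H)
  · intro H
    linear_combination e * H

private lemma algB {p q x y : ℝ} (hp : 0 < p) (hq : 0 < q) :
    p⁻¹ * x = q⁻¹ * y ↔ q * x = p * y := by
  rw [inv_mul_eq_div, inv_mul_eq_div, div_eq_div_iff (ne_of_gt hp) (ne_of_gt hq)]
  constructor <;> intro H <;> linear_combination H

/-- Sufficiency: a binary protected attribute `S` and a binary ground truth `Y` are
conditionally independent given the binary prediction `Ŷ` if and only if exact
conditional use accuracy equality holds:
`P[Y = 1 | S = 1, Ŷ = 1] = P[Y = 1 | S ≠ 1, Ŷ = 1]` and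
`P[Y = 0 | S = 1, Ŷ = 0] = P[Y = 0 | S ≠ 1, Ŷ = 0]`. -/
theorem condIndep_iff_cond_use_accuracy {Ω : Type*} [MeasurableSpace Ω]
    (P : Measure Ω) [IsProbabilityMeasure P]
    (S Yhat Y : Ω → Bool) (hS : Measurable S) (hYhat : Measurable Yhat) (hY : Measurable Y)
    (hpos : ∀ yh : Bool, 0 < P {ω | S ω = true ∧ Yhat ω = yh} ∧
      0 < P {ω | S ω ≠ true ∧ Yhat ω = yh}) :
    (∀ yh : Bool, P {ω | Yhat ω = yh} ≠ 0 → ∀ s y : Bool,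
        P[|{ω | Yhat ω = yh}] {ω | S ω = s ∧ Y ω = y}
          = P[|{ω | Yhat ω = yh}] {ω | S ω = s} * P[|{ω | Yhat ω = yh}] {ω | Y ω = y}) ↔
      (P[|{ω | S ω = true ∧ Yhat ω = true}] {ω | Y ω = true}
          = P[|{ω | S ω ≠ true ∧ Yhat ω = true}] {ω | Y ω = true} ∧
        P[|{ω | S ω = true ∧ Yhat ω = false}] {ω | Y ω = false}
          = P[|{ω | S ω ≠ true ∧ Yhat ω = false}] {ω | Y ω = false}) := by
  have mS : ∀ s : Bool, MeasurableSet {ω | S ω = s} := fun s => hS (MeasurableSet.singleton s)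
  have mH : ∀ h : Bool, MeasurableSet {ω | Yhat ω = h} := fun h => hYhat (MeasurableSet.singleton h)
  have mY : ∀ y : Bool, MeasurableSet {ω | Y ω = y} := fun y => hY (MeasurableSet.singleton y)
  have mSH : ∀ s h : Bool, MeasurableSet {ω | S ω = s ∧ Yhat ω = h} :=
    fun s h => (mS s).inter (mH h)
  -- set identities
  have eT : ∀ s y h : Bool, ({ω | S ω = s ∧ Yhat ω = h} ∩ {ω | Y ω = y})
      = {ω | S ω = s ∧ Y ω = y ∧ Yhat ω = h} := by
    intro s y h; ext ω; simp only [Set.mem_inter_iff, Set.mem_setOf_eq]; tauto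
  have eT2 : ∀ s y h : Bool, ({ω | Yhat ω = h} ∩ {ω | S ω = s ∧ Y ω = y})
      = {ω | S ω = s ∧ Y ω = y ∧ Yhat ω = h} := by
    intro s y h; ext ω; simp only [Set.mem_inter_iff, Set.mem_setOf_eq]; tauto
  have eS : ∀ s h : Bool, ({ω | Yhat ω = h} ∩ {ω | S ω = s})
      = {ω | S ω = s ∧ Yhat ω = h} := by
    intro s h; ext ω; simp only [Set.mem_inter_iff, Set.mem_setOf_eq]; tauto
  have eY : ∀ y h s : Bool, (({ω | Yhat ω = h} ∩ {ω | Y ω = y}) ∩ {ω | S ω = s})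
      = {ω | S ω = s ∧ Y ω = y ∧ Yhat ω = h} := by
    intro y h s; ext ω; simp only [Set.mem_inter_iff, Set.mem_setOf_eq]; tauto
  have hB' : ∀ h : Bool, {ω | S ω ≠ true ∧ Yhat ω = h} = {ω | S ω = false ∧ Yhat ω = h} := by
    intro h; ext ω; simp [Bool.not_eq_true]
  -- measure decompositions
  have m2 : ∀ s h : Bool, P {ω | S ω = s ∧ Yhat ω = h}
      = P {ω | S ω = s ∧ Y ω = true ∧ Yhat ω = h}
        + P {ω | S ω = s ∧ Y ω = false ∧ Yhat ω = h} := by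
    intro s h
    rw [split_bool P hY _ (mSH s h), eT s true h, eT s false h]
  have m5 : ∀ y h : Bool, P ({ω | Yhat ω = h} ∩ {ω | Y ω = y})
      = P {ω | S ω = true ∧ Y ω = y ∧ Yhat ω = h}
        + P {ω | S ω = false ∧ Y ω = y ∧ Yhat ω = h} := by
    intro y h
    rw [split_bool P hS _ ((mH h).inter (mY y)), eY y h true, eY y h false]
  have m4 : ∀ s h : Bool, P ({ω | Yhat ω = h} ∩ {ω | S ω = s})
      = P {ω | S ω = s ∧ Y ω = true ∧ Yhat ω = h}
        + P {ω | S ω = s ∧ Y ω = false ∧ Yhat ω = h} := by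
    intro s h; rw [eS s h, m2 s h]
  have m3 : ∀ h : Bool, P {ω | Yhat ω = h}
      = (P {ω | S ω = true ∧ Y ω = true ∧ Yhat ω = h}
          + P {ω | S ω = true ∧ Y ω = false ∧ Yhat ω = h})
        + (P {ω | S ω = false ∧ Y ω = true ∧ Yhat ω = h}
          + P {ω | S ω = false ∧ Y ω = false ∧ Yhat ω = h}) := by
    intro h
    rw [split_bool P hS _ (mH h), eS true h, eS false h, m2 true h, m2 false h]
  -- positivity / finiteness
  have hApos : ∀ h : Bool, P {ω | S ω = true ∧ Yhat ω = h} ≠ 0 := fun h => (hpos h).1.ne'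
  have hBpos : ∀ h : Bool, P {ω | S ω = false ∧ Yhat ω = h} ≠ 0 := by
    intro h; rw [← hB' h]; exact (hpos h).2.ne'
  have hEpos : ∀ h : Bool, P {ω | Yhat ω = h} ≠ 0 := by
    intro h hc
    exact hApos h (measure_mono_null (fun ω hω => hω.2) hc)
  have fin : ∀ A : Set Ω, P A ≠ ∞ := fun A => measure_ne_top P A
  -- real atoms
  have hAposR : ∀ h : Bool,
      0 < (P {ω | S ω = true ∧ Y ω = true ∧ Yhat ω = h}).toReal
          + (P {ω | S ω = true ∧ Y ω = false ∧ Yhat ω = h}).toReal := by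
    intro h
    rw [← ENNReal.toReal_add (fin _) (fin _), ← m2 true h]
    exact ENNReal.toReal_pos (hApos h) (fin _)
  have hBposR : ∀ h : Bool,
      0 < (P {ω | S ω = false ∧ Y ω = true ∧ Yhat ω = h}).toReal
          + (P {ω | S ω = false ∧ Y ω = false ∧ Yhat ω = h}).toReal := by
    intro h
    rw [← ENNReal.toReal_add (fin _) (fin _), ← m2 false h]
    exact ENNReal.toReal_pos (hBpos h) (fin _)
  have hEposR : ∀ h : Bool,
      0 < ((P {ω | S ω = true ∧ Y ω = true ∧ Yhat ω = h}).toReal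
          + (P {ω | S ω = true ∧ Y ω = false ∧ Yhat ω = h}).toReal)
          + ((P {ω | S ω = false ∧ Y ω = true ∧ Yhat ω = h}).toReal
          + (P {ω | S ω = false ∧ Y ω = false ∧ Yhat ω = h}).toReal) := by
    intro h
    have h1 := hAposR h
    have h2 := hBposR h
    linarith
  -- conversion of the LHS equations
  have convL : ∀ h s y : Bool,
      (P[|{ω | Yhat ω = h}] {ω | S ω = s ∧ Y ω = y}
          = P[|{ω | Yhat ω = h}] {ω | S ω = s} * P[|{ω | Yhat ω = h}] {ω | Y ω = y}) ↔
      (((P {ω | S ω = true ∧ Y ω = true ∧ Yhat ω = h}).toReal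
          + (P {ω | S ω = true ∧ Y ω = false ∧ Yhat ω = h}).toReal)
          + ((P {ω | S ω = false ∧ Y ω = true ∧ Yhat ω = h}).toReal
          + (P {ω | S ω = false ∧ Y ω = false ∧ Yhat ω = h}).toReal))
        * (P {ω | S ω = s ∧ Y ω = y ∧ Yhat ω = h}).toReal
      = ((P {ω | S ω = s ∧ Y ω = true ∧ Yhat ω = h}).toReal
          + (P {ω | S ω = s ∧ Y ω = false ∧ Yhat ω = h}).toReal)
        * ((P {ω | S ω = true ∧ Y ω = y ∧ Yhat ω = h}).toReal
          + (P {ω | S ω = false ∧ Y ω = y ∧ Yhat ω = h}).toReal) := by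
    intro h s y
    have hE0 : P {ω | Yhat ω = h} ≠ 0 := hEpos h
    rw [cond_apply (mH h) P, cond_apply (mH h) P, cond_apply (mH h) P,
      eT2 s y h, m4 s h, m5 y h]
    have finL : (P {ω | Yhat ω = h})⁻¹ * P {ω | S ω = s ∧ Y ω = y ∧ Yhat ω = h} ≠ ∞ :=
      ENNReal.mul_ne_top (ENNReal.inv_ne_top.2 hE0) (fin _)
    have finR : ((P {ω | Yhat ω = h})⁻¹
          * (P {ω | S ω = s ∧ Y ω = true ∧ Yhat ω = h}
            + P {ω | S ω = s ∧ Y ω = false ∧ Yhat ω = h}))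
        * ((P {ω | Yhat ω = h})⁻¹
          * (P {ω | S ω = true ∧ Y ω = y ∧ Yhat ω = h}
            + P {ω | S ω = false ∧ Y ω = y ∧ Yhat ω = h})) ≠ ∞ :=
      ENNReal.mul_ne_top
        (ENNReal.mul_ne_top (ENNReal.inv_ne_top.2 hE0)
          (ENNReal.add_ne_top.2 ⟨fin _, fin _⟩))
        (ENNReal.mul_ne_top (ENNReal.inv_ne_top.2 hE0)
          (ENNReal.add_ne_top.2 ⟨fin _, fin _⟩))
    rw [← ENNReal.toReal_eq_toReal_iff' finL finR]
    simp only [ENNReal.toReal_mul, ENNReal.toReal_inv]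
    rw [m3 h]
    simp [ENNReal.toReal_add, measure_ne_top]
    exact algA (hEposR h)
  -- conversion of the RHS equations
  have convR : ∀ h y : Bool,
      (P[|{ω | S ω = true ∧ Yhat ω = h}] {ω | Y ω = y}
          = P[|{ω | S ω = false ∧ Yhat ω = h}] {ω | Y ω = y}) ↔
      ((P {ω | S ω = false ∧ Y ω = true ∧ Yhat ω = h}).toReal
          + (P {ω | S ω = false ∧ Y ω = false ∧ Yhat ω = h}).toReal)
        * (P {ω | S ω = true ∧ Y ω = y ∧ Yhat ω = h}).toReal
      = ((P {ω | S ω = true ∧ Y ω = true ∧ Yhat ω = h}).toReal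
          + (P {ω | S ω = true ∧ Y ω = false ∧ Yhat ω = h}).toReal)
        * (P {ω | S ω = false ∧ Y ω = y ∧ Yhat ω = h}).toReal := by
    intro h y
    rw [cond_apply (mSH true h) P, cond_apply (mSH false h) P, eT true y h, eT false y h]
    have finL : (P {ω | S ω = true ∧ Yhat ω = h})⁻¹
        * P {ω | S ω = true ∧ Y ω = y ∧ Yhat ω = h} ≠ ∞ :=
      ENNReal.mul_ne_top (ENNReal.inv_ne_top.2 (hApos h)) (fin _)
    have finR : (P {ω | S ω = false ∧ Yhat ω = h})⁻¹
        * P {ω | S ω = false ∧ Y ω = y ∧ Yhat ω = h} ≠ ∞ :=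
      ENNReal.mul_ne_top (ENNReal.inv_ne_top.2 (hBpos h)) (fin _)
    rw [← ENNReal.toReal_eq_toReal_iff' finL finR]
    simp only [ENNReal.toReal_mul, ENNReal.toReal_inv]
    rw [m2 true h, m2 false h]
    simp [ENNReal.toReal_add, measure_ne_top]
    exact algB (hAposR h) (hBposR h)
  constructor
  · intro H
    have c1 := (convL true true true).mp (H true (hEpos true) true true)
    have c2 := (convL false true false).mp (H false (hEpos false) true false)
    rw [hB' true, hB' false]
    exact ⟨(convR true true).mpr (by linear_combination c1),
      (convR false false).mpr (by linear_combination c2)⟩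
  · rintro ⟨H1, H2⟩ h - s y
    rw [hB' true] at H1
    rw [hB' false] at H2
    have c1 := (convR true true).mp H1
    have c2 := (convR false false).mp H2
    have cross : ∀ h' : Bool,
        (P {ω | S ω = true ∧ Y ω = true ∧ Yhat ω = h'}).toReal
          * (P {ω | S ω = false ∧ Y ω = false ∧ Yhat ω = h'}).toReal
        = (P {ω | S ω = true ∧ Y ω = false ∧ Yhat ω = h'}).toReal
          * (P {ω | S ω = false ∧ Y ω = true ∧ Yhat ω = h'}).toReal := by
      intro h'
      cases h'
      · linear_combination -c2
      · linear_combination c1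
    have cr := cross h
    cases s <;> cases y <;>
      [exact (convL h false false).mpr (by linear_combination cr);
       exact (convL h false true).mpr (by linear_combination -cr);
       exact (convL h true false).mpr (by linear_combination -cr);
       exact (convL h true true).mpr (by linear_combination cr)]
end
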